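/- arXiv:1807.10566 — 4 statements merged into one kernel-verified Lean document; each statement's English description precedes it below -/
import Mathlib

section
/- Let p : E ⥤ B be a functor equipped with a cleavage of cocartesian lifts: for every object e of E and every morphism f : p(e) ⟶ b in B, there are a chosen object e_f of E with p(e_f) = b and a chosen morphism φ_f : e ⟶ e_f with p(φ_f) equal to f (modulo the equality p(e_f) = b), such that φ_f is cocartesian with respect to p, and such that the chosen lift of the identity morphism 𝟙_{p(e)} is 𝟙_e. Let K denote the comma category of p over the identity functor of B, whose objects are triples (e, b, f : p(e) ⟶ b), and let j : E ⥤ K be the functor e ↦ (e, p(e), 𝟙_{p(e)}). Then there exists a functor ℓ : K ⥤ E such that j ⋙ ℓ = 𝟭_E and ℓ ⋙ p equals the projection functor K ⥤ B sending (e, b, f) to b. -/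
open CategoryTheory

/-- A morphism `m : e ⟶ e'` is cocartesian with respect to a functor `P` if every
factorization of the image of a morphism `e ⟶ e''` through `P.map m` lifts uniquely. -/
def IsCocartesianMor {E : Type*} [Category E] {B : Type*} [Category B]
    (P : E ⥤ B) {e e' : E} (m : e ⟶ e') : Prop :=
  ∀ ⦃e'' : E⦄ (m' : e ⟶ e'') (b : P.obj e' ⟶ P.obj e''), P.map m ≫ b = P.map m' →
    ∃! ℓ : e' ⟶ e'', m ≫ ℓ = m' ∧ P.map ℓ = b

/-- The functor `E ⥤ Comma p (𝟭 B)` sending `e` to `(e, p(e), 𝟙_{p(e)})`. -/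
@[simps]
def commaUnit {E B : Type*} [Category E] [Category B] (p : E ⥤ B) :
    E ⥤ Comma p (𝟭 B) where
  obj e := { left := e, right := p.obj e, hom := 𝟙 (p.obj e) }
  map φ := { left := φ, right := p.map φ, w := by simp }

/-- a functor `p : E ⥤ B` equipped with a normalized cleavage of cocartesian
lifts admits a functorial lift `ℓ : Comma p (𝟭 B) ⥤ E` splitting the unit
`j : E ⥤ Comma p (𝟭 B)` and lying over the second projection. -/
theorem opfibration_right_map {E B : Type*} [Category E] [Category B] (p : E ⥤ B)
    (Lobj : ∀ (e : E) {b : B}, (p.obj e ⟶ b) → E)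
    (hLobj : ∀ (e : E) {b : B} (f : p.obj e ⟶ b), p.obj (Lobj e f) = b)
    (Lmap : ∀ (e : E) {b : B} (f : p.obj e ⟶ b), e ⟶ Lobj e f)
    (hLmap : ∀ (e : E) {b : B} (f : p.obj e ⟶ b),
      p.map (Lmap e f) = f ≫ eqToHom (hLobj e f).symm)
    (hcocart : ∀ (e : E) {b : B} (f : p.obj e ⟶ b), IsCocartesianMor p (Lmap e f))
    (hLid : ∀ e : E, Lobj e (𝟙 (p.obj e)) = e)
    (hLmapid : ∀ e : E, Lmap e (𝟙 (p.obj e)) = eqToHom (hLid e).symm) :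
    ∃ ℓ : Comma p (𝟭 B) ⥤ E,
      commaUnit p ⋙ ℓ = 𝟭 E ∧ ℓ ⋙ p = Comma.snd p (𝟭 B) := by
  have key : ∀ (X Y : Comma p (𝟭 B)) (g : X ⟶ Y),
      ∃! ℓ' : Lobj X.left X.hom ⟶ Lobj Y.left Y.hom,
        (Lmap X.left X.hom ≫ ℓ' = g.left ≫ Lmap Y.left Y.hom ∧
          p.map ℓ' = eqToHom (hLobj X.left X.hom) ≫ g.right ≫
            eqToHom (hLobj Y.left Y.hom).symm) := by
    intro X Y g
    apply hcocart
    have w := g.w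
    simp only [Functor.id_obj, Functor.id_map] at w
    simp [hLmap, reassoc_of% w]
  choose lm hP huniq using key
  refine ⟨{ obj := fun X => Lobj X.left X.hom
            map := fun {X Y} g => lm X Y g
            map_id := ?_
            map_comp := ?_ }, ?_, ?_⟩
  · intro X
    refine (huniq X X (𝟙 X) _ ?_).symm
    constructor
    · simp
    · simp
  · intro X Y Z f g
    refine (huniq X Z (f ≫ g) _ ?_).symm
    obtain ⟨hf1, hf2⟩ := hP X Y f
    obtain ⟨hg1, hg2⟩ := hP Y Z g
    constructor
    · rw [reassoc_of% hf1, hg1]; simp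
    · rw [p.map_comp, hf2, hg2]; simp
  · refine CategoryTheory.Functor.ext (fun e => hLid e) ?_
    intro e e' φ
    refine (huniq _ _ ((commaUnit p).map φ) _ ?_).symm
    constructor
    · change Lmap e (𝟙 (p.obj e)) ≫ _ = φ ≫ Lmap e' (𝟙 (p.obj e'))
      rw [hLmapid, hLmapid]
      erw [eqToHom_trans_assoc, eqToHom_refl, Category.id_comp]
      rfl
    · simp only [Functor.map_comp, eqToHom_map, Functor.id_map, commaUnit_map_right]
      erw [eqToHom_map]
      rfl
  · refine CategoryTheory.Functor.ext (fun X => hLobj X.left X.hom) ?_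
    intro X Y g
    exact (hP X Y g).2
end

section
/- Let Γ be a category and F : Γ ⥤ Cat a functor, and let π : Grothendieck F ⥤ Γ be the forgetful functor. Let K denote the comma category of π over the identity functor of Γ, whose objects are triples ((X, Y), b, f : X ⟶ b) with (X, Y) an object of Grothendieck F, and let j : Grothendieck F ⥤ K be the functor (X, Y) ↦ ((X, Y), X, 𝟙_X). Then there exists a functor ℓ : K ⥤ Grothendieck F sending ((X, Y), b, f) to (b, F(f)(Y)), such that j ⋙ ℓ = 𝟭 (the identity of Grothendieck F) and ℓ ⋙ π equals the projection functor K ⥤ Γ sending ((X, Y), b, f) to b. -/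
open CategoryTheory

universe v₂ u₂ v u

def commaHom {Γ : Type u} [Category.{v} Γ] {F : Γ ⥤ Cat.{v₂, u₂}}
    (k : Comma (Grothendieck.forget F) (𝟭 Γ)) : k.left.base ⟶ k.right := k.hom

@[simp]
lemma commaHom_commaUnit {Γ : Type u} [Category.{v} Γ] {F : Γ ⥤ Cat.{v₂, u₂}}
    (X : Grothendieck F) : commaHom ((commaUnit (Grothendieck.forget F)).obj X) = 𝟙 X.base := rfl

lemma eqToHom_map_aux {C D : Type*} [Category C] [Category D] (G : C ⥤ D) {x y : C} {a b : D}
    (p : a = b) (q : b = G.obj x) (r : x = y) (s : a = G.obj y) :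
    eqToHom p ≫ eqToHom q ≫ G.map (eqToHom r) = eqToHom s := by
  subst r; simp

lemma eqToHom_map_aux2 {C D : Type*} [Category C] [Category D] (G : C ⥤ D) {x y : C}
    {a b b' c' m m' z : D} (p : a = b) (q : b = G.obj x) (r : x = y) (p' : a = b') (q' : b' = c')
    (s : c' = G.obj y) (A : G.obj y ⟶ m) (t : m = m') (u : m' = m) (B : m ⟶ z) :
    eqToHom p ≫ eqToHom q ≫ G.map (eqToHom r) ≫ A ≫ B =
      eqToHom p' ≫ eqToHom q' ≫ (eqToHom s ≫ A ≫ eqToHom t) ≫ eqToHom u ≫ B := by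
  subst r t; simp

lemma eqToHom_base_aux {C : Type*} [Category C] {a b : C} (f : a ⟶ b) (p : a = a) (q : b = b) :
    f = eqToHom p ≫ f ≫ eqToHom q := by
  simp

lemma eqToHom_fiber_aux {C D E : Type*} [Category C] [Category D] [Category E] (G : D ⥤ E)
    (H : C ⥤ E) {y z : D} (φ : y ⟶ z) {x1 x2 : C} (e2 : x1 = x2) {w u : E} (q1 : w = u)
    (q2 : u = G.obj y) (p1 : w = H.obj x1) (p3 : H.obj x2 = G.obj y) (p5 : G.obj z = G.obj z) :
    eqToHom q1 ≫ eqToHom q2 ≫ G.map φ =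
      eqToHom p1 ≫ H.map (eqToHom e2) ≫ eqToHom p3 ≫ G.map φ ≫ eqToHom p5 := by
  subst e2; simp

lemma grothendieck_lift_eq {Γ : Type u} [Category.{v} Γ] (F : Γ ⥤ Cat.{v₂, u₂})
    {k₀ k₁ : Comma (Grothendieck.forget F) (𝟭 Γ)} (γ : k₀ ⟶ k₁) :
    (F.map γ.right).toFunctor.obj ((F.map (commaHom k₀)).toFunctor.obj k₀.left.fiber) =
      (F.map (commaHom k₁)).toFunctor.obj ((F.map γ.left.base).toFunctor.obj k₀.left.fiber) := by
  have h : commaHom k₀ ≫ γ.right = γ.left.base ≫ commaHom k₁ := by exact γ.w.symm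
  have := congrArg (fun f => (F.map f).toFunctor.obj k₀.left.fiber) h
  simpa [Functor.map_comp] using this

/-- The lift functor. -/
@[simps]
def grothendieckLift {Γ : Type u} [Category.{v} Γ] (F : Γ ⥤ Cat.{v₂, u₂}) :
    Comma (Grothendieck.forget F) (𝟭 Γ) ⥤ Grothendieck F where
  obj k := { base := k.right, fiber := (F.map (commaHom k)).toFunctor.obj k.left.fiber }
  map {k₀ k₁} γ :=
    { base := γ.right
      fiber := eqToHom (grothendieck_lift_eq F γ) ≫ (F.map (commaHom k₁)).toFunctor.map γ.left.fiber }
  map_id k := by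
    apply Grothendieck.ext
    · simp [Grothendieck.id_fiber]
      exact eqToHom_map_aux _ _ _ _ _
    · simp
  map_comp {k₀ k₁ k₂} γ δ := by
    apply Grothendieck.ext
    · simp [Grothendieck.comp_fiber]
      simp only [Functor.map_comp, eqToHom_map]
      have h : commaHom k₁ ≫ δ.right = δ.left.base ≫ commaHom k₂ := by exact δ.w.symm
      have hfun : F.map (commaHom k₁) ≫ F.map δ.right = F.map δ.left.base ≫ F.map (commaHom k₂) := by
        rw [← F.map_comp, ← F.map_comp, h]
      have := Functor.congr_hom (congrArg Cat.Hom.toFunctor hfun) γ.left.fiber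
      simp only [Cat.Hom.comp_map] at this
      simp only [this, eqToHom_map]
      exact eqToHom_map_aux2 (F.map (commaHom k₂)).toFunctor _ _ _ _ _ _ _ _ _ _
    · simp

/-- for `F : Γ ⥤ Cat`, the forgetful functor `π : Grothendieck F ⥤ Γ` admits a
functorial lift `ℓ : Comma π (𝟭 Γ) ⥤ Grothendieck F`, sending `((X, Y), b, f)` to
`(b, F(f)(Y))`, which splits the unit `j` and lies over the second projection. -/
theorem grothendieck_forget_right_map {Γ : Type u} [Category.{v} Γ]
    (F : Γ ⥤ Cat.{v₂, u₂}) :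
    ∃ ℓ : Comma (Grothendieck.forget F) (𝟭 Γ) ⥤ Grothendieck F,
      (∀ k : Comma (Grothendieck.forget F) (𝟭 Γ),
        ℓ.obj k = ({ base := k.right, fiber := (F.map k.hom).toFunctor.obj k.left.fiber } :
          Grothendieck F)) ∧
      commaUnit (Grothendieck.forget F) ⋙ ℓ = 𝟭 (Grothendieck F) ∧
      ℓ ⋙ Grothendieck.forget F = Comma.snd (Grothendieck.forget F) (𝟭 Γ) := by
  refine ⟨grothendieckLift F, fun k => rfl, ?_, ?_⟩
  · have hobj : ∀ X, (commaUnit (Grothendieck.forget F) ⋙ grothendieckLift F).obj X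
        = (𝟭 (Grothendieck F)).obj X := by
      intro X
      obtain ⟨b, y⟩ := X
      simp [grothendieckLift]
      exact heq_of_eq (Functor.congr_obj (congrArg Cat.Hom.toFunctor (F.map_id b)) y)
    refine CategoryTheory.Functor.ext hobj fun X Y f => ?_
    rw [Grothendieck.eqToHom_eq, Grothendieck.eqToHom_eq]
    apply Grothendieck.ext
    · have h1 := Functor.congr_hom (congrArg Cat.Hom.toFunctor (F.map_id Y.base)) f.fiber
      simp [grothendieckLift, eqToHom_map, h1]
      exact eqToHom_fiber_aux _ _ _ _ _ _ _ _ _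
    · simp [grothendieckLift]
      exact eqToHom_base_aux _ _ _
  · rfl
end

section
/- Let C be a category, x an object of C, D : Under x ⥤ Cat a functor, and d an object of the category D(Under.mk (𝟙 x)). Then there exists a functor s : Under x ⥤ Grothendieck D such that s composed with the forgetful functor Grothendieck D ⥤ Under x equals the identity functor of Under x, and such that the fiber component of s at the object Under.mk (𝟙 x) is d (i.e., s sends Under.mk (𝟙 x) to the object of Grothendieck D with base Under.mk (𝟙 x) and fiber d). Explicitly, one may take s to send an object f : x ⟶ y of Under x to (f, D(the unique morphism 𝟙_x ⟶ f in Under x)(d)). This interprets the right hom elimination and computation rules in the empty context. -/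
open CategoryTheory

universe v₂ u₂ v u

def ι {C : Type u} [Category.{v} C] (x : C) (u : Under x) : Under.mk (𝟙 x) ⟶ u :=
  Under.homMk u.hom

lemma ι_comp {C : Type u} [Category.{v} C] (x : C) {u u' : Under x} (f : u ⟶ u') :
    ι x u ≫ f = ι x u' := by
  apply Under.UnderMorphism.ext; exact Under.w f

lemma key {C : Type u} [Category.{v} C] (x : C) (D : Under x ⥤ Cat.{v₂, u₂})
    (d : D.obj (Under.mk (𝟙 x))) {u u' : Under x} (f : u ⟶ u') :
    (D.map f).toFunctor.obj ((D.map (ι x u)).toFunctor.obj d) = (D.map (ι x u')).toFunctor.obj d := by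
  rw [← ι_comp x f, D.map_comp]; rfl

def sec {C : Type u} [Category.{v} C] (x : C) (D : Under x ⥤ Cat.{v₂, u₂})
    (d : D.obj (Under.mk (𝟙 x))) : Under x ⥤ Grothendieck D where
  obj u := ⟨u, (D.map (ι x u)).toFunctor.obj d⟩
  map {u u'} f := ⟨f, eqToHom (key x D d f)⟩
  map_id u := by refine Grothendieck.ext _ _ rfl ?_; simp; exact eqToHom_trans _ _
  map_comp f g := by
    refine Grothendieck.ext _ _ rfl ?_
    simp [Grothendieck.comp_fiber, eqToHom_map]
    erw [eqToHom_trans, eqToHom_trans]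

/-- for `D : Under x ⥤ Cat` and an object `d` of the fiber over
`Under.mk (𝟙 x)`, there is a section `s` of the forgetful functor
`Grothendieck D ⥤ Under x` whose fiber component at `Under.mk (𝟙 x)` is `d`.
(Right hom elimination and computation in the empty context.) -/
theorem right_hom_elim_computation {C : Type u} [Category.{v} C] (x : C)
    (D : Under x ⥤ Cat.{v₂, u₂}) (d : D.obj (Under.mk (𝟙 x))) :
    ∃ s : Under x ⥤ Grothendieck D,
      s ⋙ Grothendieck.forget D = 𝟭 (Under x) ∧
      s.obj (Under.mk (𝟙 x)) = ({ base := Under.mk (𝟙 x), fiber := d } : Grothendieck D) := by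
  refine ⟨sec x D d, rfl, ?_⟩
  have h : ι x (Under.mk (𝟙 x)) = 𝟙 (Under.mk (𝟙 x)) := by
    apply Under.UnderMorphism.ext; rfl
  simp [sec, h]
end

section
/- Let C be a category, x an object of C, D : (Over x)ᵒᵖ ⥤ Cat a functor on the opposite of the slice category over x, and d an object of the category D(op (Over.mk (𝟙 x))). Then there exists a functor s : (Over x)ᵒᵖ ⥤ Grothendieck D such that s composed with the forgetful functor Grothendieck D ⥤ (Over x)ᵒᵖ equals the identity functor of (Over x)ᵒᵖ, and such that the fiber component of s at the object op (Over.mk (𝟙 x)) is d. This interprets the left hom elimination and computation rules in the empty context. -/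
open CategoryTheory

universe v₂ u₂ v u

section Aux

variable {C : Type u} [Category.{v} C] (x : C)

/-- the unique map from `op (Over.mk (𝟙 x))` to any object of `(Over x)ᵒᵖ`. -/
def leftHomι (u : (Over x)ᵒᵖ) : Opposite.op (Over.mk (𝟙 x)) ⟶ u :=
  (Over.homMk u.unop.hom : u.unop ⟶ Over.mk (𝟙 x)).op

lemma leftHomι_unique {u : (Over x)ᵒᵖ} (f : Opposite.op (Over.mk (𝟙 x)) ⟶ u) :
    f = leftHomι x u := by
  have : f.unop = (leftHomι x u).unop := by
    ext
    have := Over.w f.unop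
    simpa [leftHomι] using this
  exact Quiver.Hom.unop_inj this

lemma leftHomι_comp {u u' : (Over x)ᵒᵖ} (g : u ⟶ u') :
    leftHomι x u ≫ g = leftHomι x u' :=
  leftHomι_unique x _

lemma leftHomι_self : leftHomι x (Opposite.op (Over.mk (𝟙 x))) = 𝟙 _ :=
  (leftHomι_unique x (𝟙 _)).symm

end Aux

/-- for `D : (Over x)ᵒᵖ ⥤ Cat` and an object `d` of the fiber over
`op (Over.mk (𝟙 x))`, there is a section `s` of the forgetful functor
`Grothendieck D ⥤ (Over x)ᵒᵖ` whose fiber component at `op (Over.mk (𝟙 x))` is `d`.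
(Left hom elimination and computation in the empty context.) -/
theorem left_hom_elim_computation {C : Type u} [Category.{v} C] (x : C)
    (D : (Over x)ᵒᵖ ⥤ Cat.{v₂, u₂}) (d : D.obj (Opposite.op (Over.mk (𝟙 x)))) :
    ∃ s : (Over x)ᵒᵖ ⥤ Grothendieck D,
      s ⋙ Grothendieck.forget D = 𝟭 (Over x)ᵒᵖ ∧
      s.obj (Opposite.op (Over.mk (𝟙 x))) =
        ({ base := Opposite.op (Over.mk (𝟙 x)), fiber := d } : Grothendieck D) := by
  have key : ∀ {u u' : (Over x)ᵒᵖ} (g : u ⟶ u'),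
      (D.map g).toFunctor.obj ((D.map (leftHomι x u)).toFunctor.obj d) = (D.map (leftHomι x u')).toFunctor.obj d := by
    intro u u' g
    rw [← leftHomι_comp x g, D.map_comp]
    rfl
  refine ⟨{
    obj := fun u => ⟨u, (D.map (leftHomι x u)).toFunctor.obj d⟩
    map := fun {u u'} g => ⟨g, eqToHom (key g)⟩
    map_id := fun u => by
      apply Grothendieck.ext
      · simp
        exact eqToHom_trans _ _
      · rfl
    map_comp := fun {u u' u''} g g' => by
      apply Grothendieck.ext
      · simp [Grothendieck.comp_fiber, eqToHom_map]
        exact (eqToHom_trans _ _).trans (eqToHom_trans _ _).symm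
      · rfl
  }, ?_, ?_⟩
  · rfl
  · show (⟨_, (D.map (leftHomι x _)).toFunctor.obj d⟩ : Grothendieck D) = _
    rw [leftHomι_self, D.map_id]
    rfl
end
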